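/- Let d ≥ 1, let x ∈ ℝ^d, let 1 ≤ k ≤ d be an integer, and let S ⊆ {1,…,d} be a set of k indices of k largest-magnitude coordinates of x, i.e. |S| = k and |x_i| ≥ |x_j| for every i ∈ S and j ∉ S. Let x_S ∈ ℝ^d denote the vector that agrees with x on S and is zero outside S. Then ‖x − x_S‖₂² ≤ (1 − k/d)·‖x‖₂². -/

import Mathlib

open Finset

/-- `maskedVector x S` is the vector in `ℝ^d` agreeing with `x` on the coordinates
in `S` and equal to zero elsewhere. -/
noncomputable def maskedVector {d : ℕ} (x : EuclideanSpace ℝ (Fin d)) (S : Finset (Fin d)) :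
    EuclideanSpace ℝ (Fin d) :=
  (EuclideanSpace.equiv (Fin d) ℝ).symm fun i => if i ∈ S then x i else 0

/-- The top-`k` operator is a `(k/d)`-contraction: if `S` is a set of `k`
largest-magnitude coordinates of `x ∈ ℝ^d`, and `x_S` agrees with `x` on `S`
and vanishes elsewhere, then `‖x - x_S‖₂² ≤ (1 - k/d) ‖x‖₂²`. -/
theorem topk_contraction (d : ℕ) (hd : 1 ≤ d)
    (x : EuclideanSpace ℝ (Fin d)) (k : ℕ) (hk1 : 1 ≤ k) (hkd : k ≤ d)
    (S : Finset (Fin d)) (hScard : S.card = k)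
    (hStop : ∀ i ∈ S, ∀ j ∉ S, |x j| ≤ |x i|) :
    ‖x - maskedVector x S‖ ^ 2 ≤ (1 - (k : ℝ) / d) * ‖x‖ ^ 2 := by
  have hx : ‖x‖ ^ 2 = ∑ i, (x i) ^ 2 := by
    rw [EuclideanSpace.norm_eq, Real.sq_sqrt (by positivity)]
    simp [sq_abs]
  have hxs : ‖x - maskedVector x S‖ ^ 2 = ∑ j ∈ Sᶜ, (x j) ^ 2 := by
    rw [EuclideanSpace.norm_eq, Real.sq_sqrt (by positivity)]
    rw [← Finset.sum_subset (Finset.subset_univ Sᶜ)]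
    · apply Finset.sum_congr rfl
      intro j hj
      simp only [Finset.mem_compl] at hj
      simp [maskedVector, hj, sq_abs]
    · intro i _ hi
      simp only [Finset.mem_compl, not_not] at hi
      simp [maskedVector, hi]
  rw [hx, hxs]
  have hd0 : (0:ℝ) < d := by exact_mod_cast hd
  rw [← mul_le_mul_iff_of_pos_right hd0]
  have hsplit : ∑ i, (x i)^2 = ∑ i ∈ S, (x i)^2 + ∑ j ∈ Sᶜ, (x j)^2 :=
      (Finset.sum_add_sum_compl S _).symm
  have hcardc : Sᶜ.card = d - k := by
      rw [Finset.card_compl, hScard, Fintype.card_fin]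
  have key : (k:ℝ) * ∑ j ∈ Sᶜ, (x j)^2 ≤ ((d:ℝ) - k) * ∑ i ∈ S, (x i)^2 := by
    have h1 : ∀ j ∈ Sᶜ, (k:ℝ) * (x j)^2 ≤ ∑ i ∈ S, (x i)^2 := by
      intro j hj
      rw [Finset.mem_compl] at hj
      have : S.card • ((x j)^2) ≤ ∑ i ∈ S, (x i)^2 := by
        refine Finset.card_nsmul_le_sum S _ _ fun i hi => ?_
        have := hStop i hi j hj
        calc (x j)^2 = |x j|^2 := (sq_abs _).symm
          _ ≤ |x i|^2 := by gcongr
          _ = (x i)^2 := sq_abs _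
      rw [nsmul_eq_mul, hScard] at this
      exact this
    calc (k:ℝ) * ∑ j ∈ Sᶜ, (x j)^2 = ∑ j ∈ Sᶜ, (k:ℝ) * (x j)^2 := by
          rw [Finset.mul_sum]
      _ ≤ ∑ _j ∈ Sᶜ, ∑ i ∈ S, (x i)^2 := Finset.sum_le_sum h1
      _ = ((d:ℝ) - k) * ∑ i ∈ S, (x i)^2 := by
          rw [Finset.sum_const, hcardc, nsmul_eq_mul, Nat.cast_sub hkd]
  have hgoal : (∑ j ∈ Sᶜ, (x j)^2) * d ≤ (1 * d - k) * ∑ i, (x i)^2 := by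
    rw [hsplit]
    nlinarith [Finset.sum_nonneg (fun i (_: i ∈ S) => sq_nonneg (x i)),
      Finset.sum_nonneg (fun j (_: j ∈ Sᶜ) => sq_nonneg (x j)), key, hd0]
  calc (∑ j ∈ Sᶜ, (x j)^2) * d ≤ (1*d - k) * ∑ i, (x i)^2 := hgoal
    _ = (1 - (k:ℝ)/d) * (∑ i, (x i)^2) * d := by field_simp
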